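/- Let k ≥ 2 and let s_k(n) denote the number of length-n words over a k-letter alphabet having no square prefix. Then the limit α_k = lim_{n→∞} s_k(n)/k^n exists and satisfies α_k > 1 − 1/(k−1). -/

import Mathlib

/-- A word has a square prefix if some nonempty prefix of it is a square `x·x`. -/
def HasSquarePrefix {α : Type*} (w : List α) : Prop :=
  ∃ x : List α, x ≠ [] ∧ x ++ x <+: w

/-- `s k n`: the number of length-`n` words over a `k`-letter alphabet having no square
prefix. -/
noncomputable def s (k n : ℕ) : ℕ :=
  {w : List (Fin k) | w.length = n ∧ ¬ HasSquarePrefix w}.ncard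

namespace SqAux

open Set Finset

/-- All words of length `n`. -/
def W (k n : ℕ) : Set (List (Fin k)) := {w | w.length = n}

lemma finW (k n : ℕ) : (W k n).Finite := List.finite_length_eq _ n

lemma ncard_W (k n : ℕ) : (W k n).ncard = k ^ n := by
  rw [← Nat.card_coe_set_eq]
  have e : ↥(W k n) ≃ List.Vector (Fin k) n := Equiv.subtypeEquivRight fun _ => Iff.rfl
  rw [Nat.card_congr e, Nat.card_eq_fintype_card, card_vector, Fintype.card_fin]

/-- Words of length `n` with a square prefix `x·x` with `|x| = i`. -/
def A (k n i : ℕ) : Set (List (Fin k)) :=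
  {w | w.length = n ∧ ∃ x : List (Fin k), x.length = i ∧ x ++ x <+: w}

lemma rec_of_mem_A {k n i : ℕ} {w : List (Fin k)} (hw : w ∈ A k n i) :
    w = (w.drop i).take i ++ w.drop i := by
  obtain ⟨-, x, hx, t, ht⟩ := hw
  subst hx
  rw [← ht, List.append_assoc, List.drop_left, List.take_left]

lemma finA (k n i : ℕ) : (A k n i).Finite :=
  (finW k n).subset fun _ hw => hw.1

lemma drop_injOn {k n i : ℕ} {S : Set (List (Fin k))} (hS : S ⊆ A k n i) :
    Set.InjOn (fun w => w.drop i) S := by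
  intro w hw w' hw' h
  simp only at h
  rw [rec_of_mem_A (hS hw), rec_of_mem_A (hS hw'), h]

lemma ncard_A_le (k n i : ℕ) : (A k n i).ncard ≤ k ^ (n - i) := by
  rw [← ncard_W k (n - i)]
  refine Set.ncard_le_ncard_of_injOn (fun w => w.drop i) ?_
    (drop_injOn subset_rfl) (finW k (n - i))
  intro w hw
  simp [W, hw.1]

/-- Words of length `m` whose first two letters exist and coincide. -/
def B (k m : ℕ) : Set (List (Fin k)) :=
  {v | v.length = m ∧ ∃ a t, v = a :: a :: t}

def dbl {α : Type*} : List α → List α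
  | [] => []
  | a :: t => a :: a :: t

lemma ncard_B_ge (k m : ℕ) (hm : 2 ≤ m) : k ^ (m - 1) ≤ (B k m).ncard := by
  rw [← ncard_W k (m - 1)]
  refine Set.ncard_le_ncard_of_injOn dbl ?_ ?_ ((finW k m).subset fun v hv => hv.1)
  · rintro u hu
    have hlen : u.length = m - 1 := hu
    obtain ⟨c, t, rfl⟩ : ∃ c t, u = c :: t := by
      cases u with
      | nil => simp at hlen; omega
      | cons c t => exact ⟨c, t, rfl⟩
    refine ⟨?_, c, t, rfl⟩
    simp only [dbl, List.length_cons] at hlen ⊢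
    omega
  · intro u hu u' hu' h
    have hlen : u.length = m - 1 := hu
    have hlen' : u'.length = m - 1 := hu'
    cases u with
    | nil => simp at hlen; omega
    | cons c t =>
      cases u' with
      | nil => simp at hlen'; omega
      | cons c' t' => simpa [dbl] using congrArg List.tail h

lemma ncard_A2_diff_le (k n : ℕ) (hn : 4 ≤ n) :
    (A k n 2 \ A k n 1).ncard ≤ k ^ (n - 2) - k ^ (n - 3) := by
  have hsub : (W k (n - 2) \ B k (n - 2)).ncard ≤ k ^ (n - 2) - k ^ (n - 3) := by
    rw [Set.ncard_diff (show B k (n - 2) ⊆ W k (n - 2) from fun v hv => hv.1)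
      ((finW k (n - 2)).subset fun v hv => hv.1), ncard_W]
    have h3 : n - 2 - 1 = n - 3 := by omega
    exact Nat.sub_le_sub_left (h3 ▸ ncard_B_ge k (n - 2) (by omega)) _
  refine le_trans ?_ hsub
  refine Set.ncard_le_ncard_of_injOn (fun w => w.drop 2) ?_
    (drop_injOn Set.diff_subset) ((finW k (n - 2)).diff)
  rintro w ⟨⟨hlen, x, hx, t, ht⟩, hw1⟩
  obtain ⟨a, b, rfl⟩ := List.length_eq_two.mp hx
  constructor
  · show (w.drop 2).length = n - 2
    simp [hlen]
  · intro hB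
    simp only [B, Set.mem_setOf_eq] at hB
    obtain ⟨hlenB, c, t', hct⟩ := hB
    -- then a = b, giving a square prefix of half-length 1
    have hw : w = a :: b :: a :: b :: t := by rw [← ht]; rfl
    have hdrop : w.drop 2 = a :: b :: t := by rw [hw]; rfl
    rw [hdrop] at hct
    have hab : a = b := by
      have h1 : a = c := by injection hct
      have h2 : b = c := by injection (congrArg List.tail hct)
      rw [h1, h2]
    exact hw1 ⟨hlen, [a], rfl, a :: b :: t, by rw [hw, hab]; rfl⟩

lemma ncard_biUnion_le {α β : Type*} (F : Finset β) (A : β → Set α) :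
    (⋃ i ∈ F, A i).ncard ≤ ∑ i ∈ F, (A i).ncard := by
  classical
  induction F using Finset.induction with
  | empty => simp
  | @insert a F ha ih =>
    rw [Finset.sum_insert ha, Finset.set_biUnion_insert]
    exact (Set.ncard_union_le _ _).trans (add_le_add le_rfl ih)

/-- The set of bad words (length `n`, with a square prefix). -/
def Bad (k n : ℕ) : Set (List (Fin k)) :=
  {w | w.length = n ∧ HasSquarePrefix w}

lemma finBad (k n : ℕ) : (Bad k n).Finite := (finW k n).subset fun _ hw => hw.1

lemma bad_subset (k n : ℕ) :
    Bad k n ⊆ (A k n 1 ∪ (A k n 2 \ A k n 1)) ∪ ⋃ i ∈ Finset.Icc 3 n, A k n i := by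
  rintro w ⟨hlen, x, hx, hpre⟩
  have hxlen : 1 ≤ x.length := List.length_pos_iff.mpr hx
  have hile : x.length ≤ n := by
    have := hpre.length_le
    rw [hlen] at this
    simp only [List.length_append] at this
    omega
  rcases Nat.lt_or_ge x.length 3 with hlt | hge
  · interval_cases h : x.length
    · exact Or.inl (Or.inl ⟨hlen, x, h, hpre⟩)
    · by_cases h1 : w ∈ A k n 1
      · exact Or.inl (Or.inl h1)
      · exact Or.inl (Or.inr ⟨⟨hlen, x, h, hpre⟩, h1⟩)
  · exact Or.inr (Set.mem_biUnion (Finset.mem_Icc.mpr ⟨hge, hile⟩) ⟨hlen, x, rfl, hpre⟩)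

lemma bad_card (k n : ℕ) (hn : 4 ≤ n) :
    (Bad k n).ncard ≤
      k ^ (n - 1) + (k ^ (n - 2) - k ^ (n - 3)) + ∑ i ∈ Finset.Icc 3 n, k ^ (n - i) := by
  have hUfin : ((A k n 1 ∪ (A k n 2 \ A k n 1)) ∪ ⋃ i ∈ Finset.Icc 3 n, A k n i).Finite := by
    refine (Set.Finite.union (Set.Finite.union (finA k n 1) ((finA k n 2).diff)) ?_)
    exact Set.Finite.biUnion (Finset.Icc 3 n).finite_toSet fun i _ => finA k n i
  refine (Set.ncard_le_ncard (bad_subset k n) hUfin).trans ?_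
  refine (Set.ncard_union_le _ _).trans ?_
  have h1 : (A k n 1 ∪ (A k n 2 \ A k n 1)).ncard
      ≤ k ^ (n - 1) + (k ^ (n - 2) - k ^ (n - 3)) :=
    (Set.ncard_union_le _ _).trans
      (add_le_add (ncard_A_le k n 1) (ncard_A2_diff_le k n hn))
  have h2 : (⋃ i ∈ Finset.Icc 3 n, A k n i).ncard ≤ ∑ i ∈ Finset.Icc 3 n, k ^ (n - i) :=
    (ncard_biUnion_le _ _).trans (Finset.sum_le_sum fun i _ => ncard_A_le k n i)
  exact add_le_add h1 h2

lemma s_eq (k n : ℕ) : s k n = k ^ n - (Bad k n).ncard := by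
  have hset : {w : List (Fin k) | w.length = n ∧ ¬ HasSquarePrefix w} = W k n \ Bad k n := by
    ext w
    simp only [Set.mem_diff, Set.mem_setOf_eq, W, Bad]
    tauto
  rw [s, hset, Set.ncard_diff (show Bad k n ⊆ W k n from fun w hw => hw.1) (finBad k n),
    ncard_W]

lemma bad_le_total (k n : ℕ) : (Bad k n).ncard ≤ k ^ n := by
  rw [← ncard_W k n]
  exact Set.ncard_le_ncard (fun w hw => hw.1) (finW k n)

lemma s_lower (k : ℕ) (hk : 2 ≤ k) (n : ℕ) (hn : 4 ≤ n) :
    1 - 1 / ((k : ℝ) - 1) + 1 / (k : ℝ) ^ 3 ≤ (s k n : ℝ) / (k : ℝ) ^ n := by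
  obtain ⟨m, rfl⟩ : ∃ m, n = m + 4 := ⟨n - 4, by omega⟩
  have hK2' : (2 : ℝ) ≤ (k : ℝ) := by exact_mod_cast hk
  set K : ℝ := (k : ℝ) with hKdef
  have hK2 : (2 : ℝ) ≤ K := hK2'
  have hK0 : (0 : ℝ) < K := by linarith
  have hK1 : (0 : ℝ) < K - 1 := by linarith
  have hKne1 : K ≠ 1 := by linarith
  have hbtot := bad_le_total k (m + 4)
  have hs : (s k (m + 4) : ℝ) = K ^ (m + 4) - ((Bad k (m + 4)).ncard : ℝ) := by
    rw [s_eq, Nat.cast_sub hbtot]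
    push_cast
    ring
  have hb := bad_card k (m + 4) (by omega)
  have e1 : m + 4 - 1 = m + 3 := rfl
  have e2 : m + 4 - 2 = m + 2 := rfl
  have e3 : m + 4 - 3 = m + 1 := rfl
  rw [e1, e2, e3] at hb
  have hpow : k ^ (m + 1) ≤ k ^ (m + 2) := Nat.pow_le_pow_right (by omega) (by omega)
  have hbR : ((Bad k (m + 4)).ncard : ℝ)
      ≤ K ^ (m + 3) + (K ^ (m + 2) - K ^ (m + 1))
        + ∑ i ∈ Finset.Icc 3 (m + 4), K ^ (m + 4 - i) := by
    calc ((Bad k (m + 4)).ncard : ℝ)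
        ≤ ((k ^ (m + 3) + (k ^ (m + 2) - k ^ (m + 1))
            + ∑ i ∈ Finset.Icc 3 (m + 4), k ^ (m + 4 - i) : ℕ) : ℝ) := by exact_mod_cast hb
      _ = _ := by push_cast [Nat.cast_sub hpow]; ring_nf; rfl
  have hsum : ∑ i ∈ Finset.Icc 3 (m + 4), K ^ (m + 4 - i)
      = ∑ j ∈ Finset.range (m + 2), K ^ j := by
    refine Finset.sum_nbij' (fun i => m + 4 - i) (fun j => m + 4 - j) ?_ ?_ ?_ ?_ ?_
    · intro a ha; simp only [Finset.mem_Icc] at ha; simp only [Finset.mem_range]; omega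
    · intro a ha; simp only [Finset.mem_range] at ha; simp only [Finset.mem_Icc]; omega
    · intro a ha; simp only [Finset.mem_Icc] at ha
      show m + 4 - (m + 4 - a) = a
      omega
    · intro a ha; simp only [Finset.mem_range] at ha
      show m + 4 - (m + 4 - a) = a
      omega
    · intro a _; rfl
  have hgeom : ∑ j ∈ Finset.range (m + 2), K ^ j ≤ K ^ (m + 2) / (K - 1) := by
    rw [geom_sum_eq hKne1]
    gcongr
    linarith
  have hquot : K ^ (m + 4) / (K - 1)
      = K ^ (m + 3) + K ^ (m + 2) + K ^ (m + 2) / (K - 1) := by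
    field_simp
    ring
  have hbound : ((Bad k (m + 4)).ncard : ℝ) ≤ K ^ (m + 4) / (K - 1) - K ^ (m + 1) := by
    rw [hsum] at hbR
    linarith
  rw [le_div_iff₀ (by positivity : (0 : ℝ) < K ^ (m + 4))]
  have expand : (1 - 1 / (K - 1) + 1 / K ^ 3) * K ^ (m + 4)
      = K ^ (m + 4) - K ^ (m + 4) / (K - 1) + K ^ (m + 1) := by
    field_simp
    ring
  rw [expand, hs]
  linarith

lemma s_succ_le (k n : ℕ) (hk : 2 ≤ k) : s k (n + 1) ≤ s k n * k := by
  classical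
  set N : Set (List (Fin k)) := {w | w.length = n ∧ ¬ HasSquarePrefix w} with hN
  have finN : N.Finite := (finW k n).subset fun w hw => hw.1
  have d0 : Fin k := ⟨0, by omega⟩
  have key : ∀ w : List (Fin k), w ≠ [] → w = w.dropLast ++ [w.getLastD d0] := by
    intro w hw
    rcases List.eq_nil_or_concat w with rfl | ⟨l, a, rfl⟩
    · exact absurd rfl hw
    · rw [List.concat_eq_append, List.dropLast_concat, List.getLastD_concat]
  have hle : s k (n + 1) ≤ (N ×ˢ (Set.univ : Set (Fin k))).ncard := by
    unfold s
    refine Set.ncard_le_ncard_of_injOn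
      (fun w => (w.dropLast, w.getLastD d0)) ?_ ?_ (finN.prod Set.finite_univ)
    · rintro w ⟨hlen, hsq⟩
      refine ⟨⟨?_, ?_⟩, trivial⟩
      · simp [List.length_dropLast, hlen]
      · rintro ⟨x, hx, hpre⟩
        exact hsq ⟨x, hx, hpre.trans (List.dropLast_prefix w)⟩
    · rintro w ⟨hlen, -⟩ w' ⟨hlen', -⟩ h
      have hw : w ≠ [] := by intro h0; rw [h0] at hlen; simp at hlen
      have hw' : w' ≠ [] := by intro h0; rw [h0] at hlen'; simp at hlen'
      simp only [Prod.mk.injEq] at h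
      rw [key w hw, key w' hw', h.1, h.2]
  refine hle.trans (le_of_eq ?_)
  rw [← Nat.card_coe_set_eq, Nat.card_congr (Equiv.Set.prod _ _), Nat.card_prod]
  have hNcard : Nat.card ↥N = s k n := by
    rw [Nat.card_coe_set_eq, hN]
    rfl
  have hu : Nat.card ↥(Set.univ : Set (Fin k)) = k := by
    rw [Nat.card_congr (Equiv.Set.univ _), Nat.card_eq_fintype_card, Fintype.card_fin]
  rw [hNcard, hu]

end SqAux

/-- for `k ≥ 2`, the limit `α_k = lim_{n→∞} s_k(n)/kⁿ` exists and
satisfies `α_k > 1 − 1/(k−1)`. -/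
theorem exists_limit_s_div_pow (k : ℕ) (hk : 2 ≤ k) :
    ∃ α : ℝ, Filter.Tendsto (fun n : ℕ => (s k n : ℝ) / (k : ℝ) ^ n)
        Filter.atTop (nhds α) ∧
      1 - 1 / ((k : ℝ) - 1) < α := by
  have hK2 : (2 : ℝ) ≤ (k : ℝ) := by exact_mod_cast hk
  have hKpos : (0 : ℝ) < (k : ℝ) := by linarith
  set f : ℕ → ℝ := fun n => (s k n : ℝ) / (k : ℝ) ^ n with hf
  have anti : Antitone f := by
    refine antitone_nat_of_succ_le fun n => ?_
    have h2 : ((s k (n + 1) : ℕ) : ℝ) ≤ (s k n : ℝ) * k := by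
      exact_mod_cast SqAux.s_succ_le k n hk
    have h3 : (s k (n + 1) : ℝ) / (k : ℝ) ^ (n + 1)
        ≤ ((s k n : ℝ) * k) / (k : ℝ) ^ (n + 1) := by
      gcongr
    refine h3.trans (le_of_eq ?_)
    simp only [hf]
    rw [pow_succ]
    have hkn : (k : ℝ) ^ n ≠ 0 := by positivity
    field_simp
  have bdd : BddBelow (Set.range f) := by
    refine ⟨0, ?_⟩
    rintro x ⟨n, rfl⟩
    positivity
  have hlim := tendsto_atTop_ciInf anti bdd
  refine ⟨_, hlim, ?_⟩
  have h4 : ∀ n ≥ 4, 1 - 1 / ((k : ℝ) - 1) + 1 / (k : ℝ) ^ 3 ≤ f n := fun n hn =>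
    SqAux.s_lower k hk n hn
  have hge := ge_of_tendsto hlim (Filter.eventually_atTop.mpr ⟨4, h4⟩)
  have hpos : (0 : ℝ) < 1 / (k : ℝ) ^ 3 := by positivity
  linarith
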